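/- Let n ≥ 2 and 1 ≤ p ≤ ∞. In the real normed linear space (ℝⁿ, ‖·‖_p), every unit vector is contained in some strongly orthonormal Hamel basis in the sense of Birkhoff-James if and only if p = 2. -/

import Mathlib

/-- `x` together with the family is strongly orthonormal *relative to* the element `x i₀`
in the sense of Birkhoff-James: all members are unit vectors and
`‖x i₀‖ < ‖x i₀ + ∑_{j ≠ i₀} c j • x j‖` whenever not all the `c j` (`j ≠ i₀`) vanish. -/
def StronglyOrthRel {X : Type*} [NormedAddCommGroup X] [NormedSpace ℝ X]
    {n : ℕ} (x : Fin n → X) (i₀ : Fin n) : Prop :=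
  (∀ i, ‖x i‖ = 1) ∧
    ∀ c : Fin n → ℝ, (∃ j, j ≠ i₀ ∧ c j ≠ 0) →
      ‖x i₀‖ < ‖x i₀ + ∑ j ∈ Finset.univ.erase i₀, c j • x j‖

/-- A finite family of unit vectors that is strongly orthonormal in the sense of
Birkhoff-James. -/
def StronglyOrthSet {X : Type*} [NormedAddCommGroup X] [NormedSpace ℝ X]
    {n : ℕ} (x : Fin n → X) : Prop :=
  ∀ i, StronglyOrthRel x i

open Real Filter Finset



open Real Filter Finset

lemma sum_fin_two {m : ℕ} (f : Fin (m+2) → ℝ) (hf : ∀ k : Fin (m+2), k ≠ 0 → k ≠ 1 → f k = 0) :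
    ∑ k, f k = f 0 + f 1 := by
  rw [Fin.sum_univ_succ, Fin.sum_univ_succ]
  have h2 : ∀ i : Fin m, f i.succ.succ = 0 := by
    intro i
    refine hf _ (Fin.succ_ne_zero _) ?_
    rw [← Fin.succ_zero_eq_one]
    intro hcon
    exact Fin.succ_ne_zero i (Fin.succ_injective _ hcon)
  simp [h2, Fin.succ_zero_eq_one]

lemma deriv_zero_of_min {n : ℕ} {q : ℝ} (hq : 1 < q) (x y : Fin n → ℝ)
    (h : ∀ t : ℝ, ∑ k, |x k| ^ q ≤ ∑ k, |x k + t * y k| ^ q) :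
    ∑ k, |x k| ^ (q - 2) * x k * y k = 0 := by
  have hder : HasDerivAt (fun t : ℝ => ∑ k, |x k + t * y k| ^ q)
      (∑ k, q * (|x k| ^ (q - 2) * x k * y k)) 0 := by
    apply HasDerivAt.fun_sum
    intro k _
    have h1 : HasDerivAt (fun t : ℝ => x k + t * y k) (y k) 0 := by
      simpa using ((hasDerivAt_id (0:ℝ)).mul_const (y k)).const_add (x k)
    have h2 := (hasDerivAt_abs_rpow (x k + 0 * y k) hq).comp 0 h1
    simp only [zero_mul, add_zero] at h2
    convert h2 using 1
    · rfl
    · rfl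
    · ring
  have hmin : IsLocalMin (fun t : ℝ => ∑ k, |x k + t * y k| ^ q) 0 := by
    refine Filter.Eventually.of_forall fun t => ?_
    simpa using h t
  have hz := hmin.hasDerivAt_eq_zero hder
  rw [← Finset.mul_sum] at hz
  rcases mul_eq_zero.mp hz with h' | h'
  · exact absurd h' (by positivity)
  · exact h'

lemma sum_le_of_norm_le {n : ℕ} {p : ENNReal} [Fact (1 ≤ p)] (hp : 0 < p.toReal)
    (X Y : PiLp p (fun _ : Fin n => ℝ)) (h : ‖X‖ ≤ ‖Y‖) :
    ∑ k, |X k| ^ p.toReal ≤ ∑ k, |Y k| ^ p.toReal := by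
  rw [PiLp.norm_eq_sum hp, PiLp.norm_eq_sum hp] at h
  simp only [Real.norm_eq_abs] at h
  have hX : (0:ℝ) ≤ ∑ k, |X k| ^ p.toReal := by positivity
  have hY : (0:ℝ) ≤ ∑ k, |Y k| ^ p.toReal := by positivity
  have := Real.rpow_le_rpow (by positivity) h hp.le
  rwa [← Real.rpow_mul hX, ← Real.rpow_mul hY, one_div,
    inv_mul_cancel₀ hp.ne', Real.rpow_one, Real.rpow_one] at this

lemma strongRel_pair {X : Type*} [NormedAddCommGroup X] [NormedSpace ℝ X]
    {n : ℕ} {b : Fin n → X} {i j : Fin n} (hso : StronglyOrthRel b i)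
    (hj : j ≠ i) (t : ℝ) : ‖b i‖ ≤ ‖b i + t • b j‖ := by
  rcases eq_or_ne t 0 with ht | ht
  · simp [ht]
  · have key := hso.2 (fun k => if k = j then t else 0) ⟨j, hj, by simp [ht]⟩
    have hsum : ∑ k ∈ Finset.univ.erase i, (if k = j then t else 0) • b k = t • b j := by
      simp only [ite_smul, zero_smul]
      rw [Finset.sum_ite_eq' (Finset.univ.erase i) j (fun k => t • b k)]
      simp [Finset.mem_erase, hj]
    rw [hsum] at key
    exact key.le

lemma fin_one_ne_zero (m : ℕ) : (1 : Fin (m+2)) ≠ 0 := by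
  intro hcon
  have := congrArg Fin.val hcon
  rw [Fin.val_one, Fin.val_zero] at this
  exact one_ne_zero this

lemma strongRel_pair_lt {X : Type*} [NormedAddCommGroup X] [NormedSpace ℝ X]
    {n : ℕ} {b : Fin n → X} {i j : Fin n} (hso : StronglyOrthRel b i)
    (hj : j ≠ i) {t : ℝ} (ht : t ≠ 0) : ‖b i‖ < ‖b i + t • b j‖ := by
  have key := hso.2 (fun k => if k = j then t else 0) ⟨j, hj, by simp [ht]⟩
  have hsum : ∑ k ∈ Finset.univ.erase i, (if k = j then t else 0) • b k = t • b j := by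
    simp only [ite_smul, zero_smul]
    rw [Finset.sum_ite_eq' (Finset.univ.erase i) j (fun k => t • b k)]
    simp [Finset.mem_erase, hj]
  rwa [hsum] at key

lemma not_prop_top (m : ℕ) :
    ¬ (∀ v : PiLp ⊤ (fun _ : Fin (m + 2) => ℝ), ‖v‖ = 1 →
      ∃ b : Fin (m + 2) → PiLp ⊤ (fun _ : Fin (m + 2) => ℝ),
        LinearIndependent ℝ b ∧ Submodule.span ℝ (Set.range b) = ⊤ ∧
        StronglyOrthSet b ∧ ∃ i, b i = v) := by
  intro h
  set v : PiLp ⊤ (fun _ : Fin (m + 2) => ℝ) :=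
    WithLp.toLp ⊤ (fun k : Fin (m+2) => (if k = 0 then 1 else if k = 1 then 1/2 else 0 : ℝ)) with hvdef
  have hvc : ∀ k : Fin (m+2), v k = if k = 0 then 1 else if k = 1 then 1/2 else 0 :=
    fun k => rfl
  have hv : ‖v‖ = 1 := by
    rw [PiLp.norm_eq_ciSup]
    apply le_antisymm
    · apply ciSup_le
      intro k
      rw [Real.norm_eq_abs, hvc]
      split_ifs <;> norm_num [abs_of_nonneg]
    · have hle := le_ciSup (f := fun k => ‖v k‖) (Finite.bddAbove_range _) 0
      simpa [hvc] using hle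
  obtain ⟨b, hli, hsp, hso, i₀, hbi⟩ := h v hv
  obtain ⟨j, hj⟩ := exists_ne i₀
  set y := b j with hydef
  have hy1 : ‖y‖ = 1 := (hso i₀).1 j
  have hyk : ∀ k, |y k| ≤ 1 := by
    intro k
    have hle := le_ciSup (f := fun k => ‖y k‖) (Finite.bddAbove_range _) k
    rw [← PiLp.norm_eq_ciSup, hy1] at hle
    simpa using hle
  set t : ℝ := if 0 ≤ y 0 then -(1/2) else 1/2 with htdef
  have ht0 : t ≠ 0 := by rw [htdef]; split_ifs <;> norm_num
  have hty : t * y 0 ≤ 0 := by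
    rw [htdef]; split_ifs with h' <;> nlinarith [h']
  have htabs : |t| = 1/2 := by
    rw [htdef]; split_ifs <;> norm_num
  have hlt := strongRel_pair_lt (hso i₀) hj ht0
  rw [hbi, hv, ← hydef] at hlt
  have hub : ‖v + t • y‖ ≤ 1 := by
    rw [PiLp.norm_eq_ciSup]
    apply ciSup_le
    intro k
    have hco : (v + t • y) k = v k + t * y k := by
      rw [PiLp.add_apply, PiLp.smul_apply, smul_eq_mul]
    rw [Real.norm_eq_abs, hco, hvc]
    have habs : ∀ i, |t * y i| ≤ 1/2 := by
      intro i
      rw [abs_mul, htabs]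
      nlinarith [hyk i, abs_nonneg (y i)]
    by_cases hk0 : k = 0
    · subst hk0
      rw [if_pos rfl]
      have h5 := habs 0
      rw [abs_le]
      constructor <;> nlinarith [neg_abs_le (t * y 0), le_abs_self (t * y 0)]
    · by_cases hk1 : k = 1
      · subst hk1
        rw [if_neg hk0, if_pos rfl]
        have h5 := habs 1
        calc |1/2 + t * y 1| ≤ |1/2| + |t * y 1| := abs_add_le _ _
          _ ≤ 1 := by rw [abs_of_pos (by norm_num : (0:ℝ) < 1/2)]; linarith
      · rw [if_neg hk0, if_neg hk1, zero_add]
        exact (habs k).trans (by norm_num)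
  linarith

set_option maxHeartbeats 2000000 in
lemma not_prop_one (m : ℕ) (p : ENNReal) [Fact (1 ≤ p)] (hq : p.toReal = 1) :
    ¬ (∀ v : PiLp p (fun _ : Fin (m + 2) => ℝ), ‖v‖ = 1 →
      ∃ b : Fin (m + 2) → PiLp p (fun _ : Fin (m + 2) => ℝ),
        LinearIndependent ℝ b ∧ Submodule.span ℝ (Set.range b) = ⊤ ∧
        StronglyOrthSet b ∧ ∃ i, b i = v) := by
  intro h
  have h10 := fin_one_ne_zero m
  have hq0 : 0 < p.toReal := by rw [hq]; norm_num
  have hnorm : ∀ x : PiLp p (fun _ : Fin (m+2) => ℝ), ‖x‖ = ∑ k, |x k| := by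
    intro x
    rw [PiLp.norm_eq_sum hq0, hq]
    simp [Real.rpow_one]
  set w : PiLp p (fun _ : Fin (m+2) => ℝ) :=
    WithLp.toLp p (fun k : Fin (m+2) => (if k = 0 then 2 else if k = 1 then 1 else 0 : ℝ)) with hwdef
  have hwc : ∀ k : Fin (m+2), w k = if k = 0 then 2 else if k = 1 then 1 else 0 :=
    fun k => rfl
  have hwz : ∀ k : Fin (m+2), k ≠ 0 → k ≠ 1 → w k = 0 := by
    intro k h0 h1; rw [hwc, if_neg h0, if_neg h1]
  have hw0 : w 0 = 2 := by rw [hwc, if_pos rfl]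
  have hw1 : w 1 = 1 := by rw [hwc, if_neg h10, if_pos rfl]
  set v : PiLp p (fun _ : Fin (m+2) => ℝ) := (3:ℝ)⁻¹ • w with hvdef
  have hvc : ∀ k, v k = 3⁻¹ * w k := fun k => by rw [hvdef, PiLp.smul_apply, smul_eq_mul]
  have hv : ‖v‖ = 1 := by
    rw [hnorm, sum_fin_two _ (fun k h0 h1 => by rw [hvc, hwz k h0 h1, mul_zero, abs_zero])]
    rw [hvc, hvc, hw0, hw1]
    norm_num [abs_of_nonneg]
  obtain ⟨b, hli, hsp, hso, i₀, hbi⟩ := h v hv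
  set e : PiLp p (fun _ : Fin (m+2) => ℝ) := WithLp.toLp p (fun k : Fin (m+2) => (if k = 0 then 1 else 0 : ℝ)) with hedef
  have hec : ∀ k : Fin (m+2), e k = if k = 0 then 1 else 0 := fun k => rfl
  have he : e ∈ Submodule.span ℝ (Set.range b) := by rw [hsp]; trivial
  obtain ⟨d, hd⟩ := (Submodule.mem_span_range_iff_exists_fun ℝ).mp he
  by_cases hall : ∀ k, k ≠ i₀ → d k = 0
  · have hsing : ∑ k, d k • b k = d i₀ • b i₀ :=
      Finset.sum_eq_single i₀ (fun k _ hk => by rw [hall k hk, zero_smul]) (by simp)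
    rw [hsing, hbi] at hd
    have h1 : d i₀ * v 1 = e 1 := by rw [← hd, PiLp.smul_apply (c := d i₀) (x := v), smul_eq_mul]
    have h0 : d i₀ * v 0 = e 0 := by rw [← hd, PiLp.smul_apply (c := d i₀) (x := v), smul_eq_mul]
    rw [hvc, hw1, hec, if_neg h10] at h1
    rw [hvc, hw0, hec, if_pos rfl] at h0
    have : d i₀ = 0 := by linarith [h1]
    rw [this] at h0
    norm_num at h0
  · push_neg at hall
    obtain ⟨j, hj, hdj⟩ := hall
    set α := d i₀ with hαdef
    have hz : ∑ k ∈ Finset.univ.erase i₀, d k • b k = e - α • v := by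
      rw [eq_sub_iff_add_eq, ← hd, ← hbi]
      exact Finset.sum_erase_add _ _ (Finset.mem_univ i₀)
    have hkey : ∀ t : ℝ, t ≠ 0 → 1 < ‖v + t • (e - α • v)‖ := by
      intro t ht
      have hlt := (hso i₀).2 (fun k => t * d k) ⟨j, hj, mul_ne_zero ht hdj⟩
      have hsum : ∑ k ∈ Finset.univ.erase i₀, (t * d k) • b k = t • (e - α • v) := by
        rw [← hz, Finset.smul_sum]
        exact Finset.sum_congr rfl fun k _ => by rw [mul_smul]
      rw [hsum, hbi, hv] at hlt
      exact hlt
    have hco : ∀ (t : ℝ) (k : Fin (m+2)),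
        (v + t • (e - α • v)) k = v k + t * (e k - α * v k) := by
      intro t k
      rw [PiLp.add_apply, PiLp.smul_apply (c := t) (x := e - α • v), PiLp.sub_apply,
        PiLp.smul_apply (c := α) (x := v), smul_eq_mul,
        smul_eq_mul]
    have hnormval : ∀ t : ℝ,
        ‖v + t • (e - α • v)‖ = |(1 - t*α) * (2/3) + t| + |(1 - t*α) * (1/3)| := by
      intro t
      rw [hnorm, sum_fin_two _ (fun k h0 h1 => by
        rw [hco, hvc, hwz k h0 h1, hec, if_neg h0]
        simp)]
      rw [hco, hco, hvc, hvc, hw0, hw1, hec, hec, if_pos rfl, if_neg h10]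
      norm_num
      ring_nf
      rw [show |1 - t*α| * (1/3) = |(1 - t*α) * (1/3)| by
        rw [abs_mul, abs_of_pos (by norm_num : (0:ℝ) < 1/3)]]
      ring_nf
    by_cases hα : α = 1
    · have hcon := hkey 1 one_ne_zero
      rw [hnormval 1, hα] at hcon
      norm_num at hcon
    · set τ : ℝ := if α < 1 then -1 else 1 with hτdef
      set ε : ℝ := 1/(4*(|α|+1)) with hεdef
      have hαnn : 0 ≤ |α| := abs_nonneg α
      have hεpos : 0 < ε := by positivity
      have hε14 : ε ≤ 1/4 := by
        rw [hεdef, div_le_div_iff₀ (by positivity) (by norm_num)]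
        nlinarith
      have hεα : ε * |α| ≤ 1/4 := by
        rw [hεdef, div_mul_eq_mul_div, div_le_div_iff₀ (by positivity) (by norm_num)]
        nlinarith
      have hτabs : |τ| = 1 := by rw [hτdef]; split_ifs <;> norm_num
      set t := ε * τ with htdef
      have ht0 : t ≠ 0 := by
        refine mul_ne_zero hεpos.ne' ?_
        rw [hτdef]; split_ifs <;> norm_num
      have htabs : |t| ≤ 1/4 := by
        rw [htdef, abs_mul, hτabs, mul_one, abs_of_pos hεpos]; exact hε14
      have htαabs : |t * α| ≤ 1/4 := by
        rw [htdef, abs_mul, abs_mul, abs_of_pos hεpos, hτabs, mul_one]; exact hεα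
      have hτsign : τ * (1 - α) < 0 := by
        rw [hτdef]; split_ifs with h'
        · have h1α : 0 < 1 - α := by linarith
          linarith
        · have h1α : 1 - α < 0 := by
            rcases lt_or_eq_of_le (not_lt.mp h') with h'' | h''
            · linarith
            · exact absurd h''.symm hα
          linarith
      have hneg : t * (1 - α) < 0 := by
        rw [htdef, mul_assoc]
        exact mul_neg_of_pos_of_neg hεpos hτsign
      have hcon := hkey t ht0
      rw [hnormval t] at hcon
      have hb1 : 3/4 ≤ 1 - t*α := by nlinarith [le_abs_self (t*α)]
      have hb2 : 0 ≤ (1 - t*α) * (2/3) + t := by nlinarith [neg_abs_le t]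
      rw [abs_of_nonneg hb2, abs_of_nonneg (by nlinarith : (0:ℝ) ≤ (1 - t*α) * (1/3))] at hcon
      have hfin : 0 < t * (1 - α) := by nlinarith
      linarith

lemma toReal_eq_two (m : ℕ) (p : ENNReal) [Fact (1 ≤ p)] (hq : 1 < p.toReal)
    (h : ∀ v : PiLp p (fun _ : Fin (m + 2) => ℝ), ‖v‖ = 1 →
      ∃ b : Fin (m + 2) → PiLp p (fun _ : Fin (m + 2) => ℝ),
        LinearIndependent ℝ b ∧ Submodule.span ℝ (Set.range b) = ⊤ ∧
        StronglyOrthSet b ∧ ∃ i, b i = v) : p.toReal = 2 := by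
  set q := p.toReal with hqdef
  have hq0 : 0 < q := by linarith
  have h10 := fin_one_ne_zero m
  set w : PiLp p (fun _ : Fin (m+2) => ℝ) :=
    WithLp.toLp p (fun k : Fin (m+2) => (if k = 0 then 2 else if k = 1 then 1 else 0 : ℝ)) with hwdef
  have hwc : ∀ k : Fin (m+2), w k = if k = 0 then 2 else if k = 1 then 1 else 0 :=
    fun k => rfl
  have hwz : ∀ k : Fin (m+2), k ≠ 0 → k ≠ 1 → w k = 0 := by
    intro k h0 h1; rw [hwc, if_neg h0, if_neg h1]
  have hw0 : w 0 = 2 := by rw [hwc, if_pos rfl]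
  have hw1 : w 1 = 1 := by rw [hwc, if_neg h10, if_pos rfl]
  have hwn : 0 < ‖w‖ := by
    rw [norm_pos_iff]
    intro hcon
    have h2 : w 0 = 0 := by rw [hcon]; rfl
    rw [hw0] at h2
    norm_num at h2
  set s : ℝ := ‖w‖⁻¹ with hsdef
  have hs : 0 < s := inv_pos.mpr hwn
  set v : PiLp p (fun _ : Fin (m+2) => ℝ) := s • w with hvdef
  have hvc : ∀ k, v k = s * w k := fun k => by rw [hvdef, PiLp.smul_apply, smul_eq_mul]
  have hsw : s * ‖w‖ = 1 := inv_mul_cancel₀ hwn.ne'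
  have hv : ‖v‖ = 1 := by
    rw [hvdef, norm_smul, Real.norm_eq_abs, abs_of_pos hs]
    exact hsw
  obtain ⟨b, hli, hsp, hso, i₀, hbi⟩ := h v hv
  have hex : ∃ j, j ≠ i₀ ∧ (b j 0 ≠ 0 ∨ b j 1 ≠ 0) := by
    by_contra hno
    push_neg at hno
    set e : PiLp p (fun _ : Fin (m+2) => ℝ) := WithLp.toLp p (fun k : Fin (m+2) => if k = 0 then (1:ℝ) else 0)
      with hedef
    have hec : ∀ k : Fin (m+2), e k = if k = 0 then 1 else 0 := fun k => rfl
    have he : e ∈ Submodule.span ℝ (Set.range b) := by rw [hsp]; trivial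
    obtain ⟨d, hd⟩ := (Submodule.mem_span_range_iff_exists_fun ℝ).mp he
    have happ : ∀ i : Fin (m+2), (∑ k, d k • b k) i = ∑ k, d k * b k i := by
      intro i
      rw [WithLp.ofLp_sum, Finset.sum_apply]
      exact Finset.sum_congr rfl fun k _ => by rw [PiLp.smul_apply, smul_eq_mul]
    have h0 : ∑ k, d k * b k 0 = 1 := by rw [← happ, hd]; rfl
    have h1 : ∑ k, d k * b k 1 = 0 := by
      rw [← happ, hd]
      show (if (1 : Fin (m+2)) = 0 then (1:ℝ) else 0) = 0
      rw [if_neg h10]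
    rw [Finset.sum_eq_single i₀ (fun k _ hk => by rw [(hno k hk).1, mul_zero]) (by simp)] at h0
    rw [Finset.sum_eq_single i₀ (fun k _ hk => by rw [(hno k hk).2, mul_zero]) (by simp)] at h1
    rw [hbi, hvc, hw0] at h0
    rw [hbi, hvc, hw1] at h1
    have hd0 : d i₀ = 0 := by
      rcases mul_eq_zero.mp h1 with h' | h'
      · exact h'
      · exact absurd h' (by positivity)
    rw [hd0] at h0
    norm_num at h0
  obtain ⟨j, hj, hj01⟩ := hex
  set y := b j with hydef
  have hAw : ∀ t : ℝ, ‖w‖ ≤ ‖w + t • y‖ := by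
    intro t
    have h2 := strongRel_pair (hso i₀) hj (s * t)
    rw [hbi] at h2
    have h3 : v + (s * t) • y = s • (w + t • y) := by
      rw [hvdef, smul_add, smul_smul]
    have h4 : s * ‖w‖ ≤ s * ‖w + t • y‖ := by
      calc s * ‖w‖ = ‖v‖ := by
            rw [hvdef, norm_smul, Real.norm_eq_abs, abs_of_pos hs]
        _ ≤ ‖v + (s * t) • y‖ := h2
        _ = s * ‖w + t • y‖ := by
            rw [h3, norm_smul, Real.norm_eq_abs, abs_of_pos hs]
    exact (mul_le_mul_iff_right₀ hs).mp h4
  have hBw : ∀ t : ℝ, ‖y‖ ≤ ‖y + t • w‖ := by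
    intro t
    have h2 := strongRel_pair (hso j) (Ne.symm hj) (t * s⁻¹)
    rw [hbi] at h2
    have h3 : (t * s⁻¹) • v = t • w := by
      rw [hvdef, smul_smul, mul_assoc, inv_mul_cancel₀ hs.ne', mul_one]
    rw [h3] at h2
    exact h2
  have hA' : ∀ t : ℝ, ∑ k, |w k| ^ q ≤ ∑ k, |(w k) + t * y k| ^ q := by
    intro t
    have h2 := sum_le_of_norm_le hq0 w (w + t • y) (hAw t)
    refine h2.trans (le_of_eq (Finset.sum_congr rfl fun k _ => ?_))
    rw [PiLp.add_apply, PiLp.smul_apply, smul_eq_mul]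
  have hB' : ∀ t : ℝ, ∑ k, |y k| ^ q ≤ ∑ k, |(y k) + t * w k| ^ q := by
    intro t
    have h2 := sum_le_of_norm_le hq0 y (y + t • w) (hBw t)
    refine h2.trans (le_of_eq (Finset.sum_congr rfl fun k _ => ?_))
    rw [PiLp.add_apply, PiLp.smul_apply, smul_eq_mul]
  have hS1 := deriv_zero_of_min hq (fun k => w k) (fun k => y k) hA'
  have hS2 := deriv_zero_of_min hq (fun k => y k) (fun k => w k) hB'
  beta_reduce at hS1 hS2
  rw [sum_fin_two _ (fun k h0 h1 => by rw [hwz k h0 h1]; simp)] at hS1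
  rw [sum_fin_two _ (fun k h0 h1 => by rw [hwz k h0 h1]; simp)] at hS2
  rw [hw0, hw1] at hS1 hS2
  have habs2 : |(2:ℝ)| = 2 := by norm_num
  have habs1 : |(1:ℝ)| = 1 := abs_one
  rw [habs2, habs1, Real.one_rpow, one_mul] at hS1
  have h21 : (2:ℝ) ^ (q-2) * 2 = 2 ^ (q-1) := by
    have he' : q - 1 = (q - 2) + 1 := by ring
    rw [he', Real.rpow_add_one two_ne_zero]
  rw [h21] at hS1
  -- hS1 : 2^(q-1) * y 0 + y 1 = 0
  have he1 : y 1 = -(2 ^ (q-1) * y 0) := by linarith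
  have hy0 : y 0 ≠ 0 := by
    intro h0
    rw [h0, mul_zero, neg_zero] at he1
    rcases hj01 with h' | h'
    · exact h' h0
    · exact h' he1
  have h2pos : (0:ℝ) < 2 ^ (q-1) := Real.rpow_pos_of_pos two_pos _
  have habsy1 : |y 1| = 2 ^ (q-1) * |y 0| := by
    rw [he1, abs_neg, abs_mul, abs_of_pos h2pos]
  have hterm : |y 1| ^ (q-2) * y 1 = -((2:ℝ) ^ ((q-1)*(q-1)) * (|y 0| ^ (q-2) * y 0)) := by
    rw [habsy1, he1, Real.mul_rpow h2pos.le (abs_nonneg _)]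
    rw [← Real.rpow_mul (by norm_num : (0:ℝ) ≤ 2)]
    have hsplit : (2:ℝ)^((q-1)*(q-1)) = 2^((q-1)*(q-2)) * 2^(q-1) := by
      rw [← Real.rpow_add two_pos]
      congr 1
      ring
    rw [hsplit]
    ring
  rw [mul_one, hterm] at hS2
  have hfac : (2 - (2:ℝ)^((q-1)*(q-1))) * (|y 0|^(q-2) * y 0) = 0 := by
    linear_combination hS2
  have hgne : |y 0|^(q-2) * y 0 ≠ 0 :=
    mul_ne_zero (Real.rpow_pos_of_pos (abs_pos.mpr hy0) _).ne' hy0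
  rcases mul_eq_zero.mp hfac with h' | h'
  · have h2e : (2:ℝ)^((q-1)*(q-1)) = 2^(1:ℝ) := by rw [Real.rpow_one]; linarith
    have hq1 := (Real.strictMono_rpow_of_base_gt_one one_lt_two).injective h2e
    have hqne : q ≠ 0 := by linarith
    have h5 : q * q = q * 2 := by linear_combination hq1
    exact mul_left_cancel₀ hqne h5
  · exact absurd h' hgne

lemma rev (m : ℕ) : ∀ v : PiLp 2 (fun _ : Fin (m + 2) => ℝ), ‖v‖ = 1 →
    ∃ b : Fin (m + 2) → PiLp 2 (fun _ : Fin (m + 2) => ℝ),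
      LinearIndependent ℝ b ∧ Submodule.span ℝ (Set.range b) = ⊤ ∧
      StronglyOrthSet b ∧ ∃ i, b i = v := by
  intro v hv
  have hfr : Module.finrank ℝ (PiLp 2 (fun _ : Fin (m+2) => ℝ)) = Fintype.card (Fin (m+2)) :=
    finrank_euclideanSpace
  have ho : Orthonormal ℝ (Set.restrict {(0 : Fin (m+2))} (fun _ => v)) := by
    constructor
    · intro i; exact hv
    · intro i j hij
      exfalso
      apply hij
      have hi := i.2
      have hj := j.2
      rw [Set.mem_singleton_iff] at hi hj
      exact Subtype.ext (hi.trans hj.symm)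
  obtain ⟨b, hb⟩ := ho.exists_orthonormalBasis_extension_of_card_eq hfr
  have hb0 : b 0 = v := hb 0 rfl
  refine ⟨b, b.orthonormal.linearIndependent, ?_, ?_, 0, hb0⟩
  · have hsp := b.toBasis.span_eq
    rwa [OrthonormalBasis.coe_toBasis] at hsp
  · intro i
    refine ⟨fun k => b.orthonormal.1 k, ?_⟩
    rintro c ⟨j, hj, hcj⟩
    set z := ∑ k ∈ Finset.univ.erase i, c k • b k with hzdef
    have hinner : inner (𝕜 := ℝ) (b i) z = 0 := by
      rw [hzdef, inner_sum]
      refine Finset.sum_eq_zero fun k hk => ?_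
      rw [real_inner_smul_right,
        b.orthonormal.2 (Ne.symm (Finset.mem_erase.mp hk).1), mul_zero]
    have hz0 : z ≠ 0 := by
      intro h0
      have hli := b.orthonormal.linearIndependent
      rw [linearIndependent_iff'] at hli
      exact hcj (hli (Finset.univ.erase i) c (hzdef ▸ h0) j
        (Finset.mem_erase.mpr ⟨hj, Finset.mem_univ j⟩))
    have hpos : 0 < ‖z‖ := norm_pos_iff.mpr hz0
    have hsq : ‖b i + z‖^2 = ‖b i‖^2 + ‖z‖^2 := by
      rw [norm_add_sq_real, hinner]; ring
    have hlt : ‖b i‖^2 < ‖b i + z‖^2 := by rw [hsq]; nlinarith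
    exact lt_of_pow_lt_pow_left₀ 2 (norm_nonneg _) hlt

open scoped ENNReal in
theorem stmt_9 (m : ℕ) (p : ℝ≥0∞) [Fact (1 ≤ p)] :
    (∀ v : PiLp p (fun _ : Fin (m + 2) => ℝ), ‖v‖ = 1 →
      ∃ b : Fin (m + 2) → PiLp p (fun _ : Fin (m + 2) => ℝ),
        LinearIndependent ℝ b ∧ Submodule.span ℝ (Set.range b) = ⊤ ∧
        StronglyOrthSet b ∧ ∃ i, b i = v) ↔ p = 2 := by
  constructor
  · intro h
    by_cases hpt : p = ⊤
    · subst hpt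
      exact absurd h (not_prop_top m)
    · have hq1 : 1 ≤ p.toReal := by
        have h1 := Fact.out (p := 1 ≤ p)
        have h2 := ENNReal.toReal_mono hpt h1
        simpa using h2
      rcases eq_or_lt_of_le hq1 with hq | hq
      · exact absurd h (not_prop_one m p hq.symm)
      · have h2 := toReal_eq_two m p hq h
        have h3 : p = ENNReal.ofReal 2 := by
          rw [← h2, ENNReal.ofReal_toReal hpt]
        rw [h3]
        norm_num
  · intro hp
    subst hp
    exact rev m
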